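/- If f is an N-expansive homeomorphism of a compact metric space whose nonwandering set Ω(f) is expansive (f restricted to Ω(f) has at most 1 point in each Γ_α ∩ Ω(f)), Ω(f) is isolated (Ω(f) = ∩_{n∈ℤ} f^n(U) for some open U), and there exist δ > 0 such that every set X disjoint from Ω(f) with diam(f^n(X)) < δ for all n ∈ ℤ has at most 2 points, then f is 2-expansive for a suitable constant. (Structure of the proof that the bitorus example is 2-expansive.) -/
import Mathlib


open Metric Set

noncomputable def iterZ {M : Type*} [TopologicalSpace M] (f : M ≃ₜ M) (n : ℤ) (x : M) : M := (f.toEquiv ^ n) x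

def GammaSet {M : Type*} [MetricSpace M] (f : M ≃ₜ M) (ε : ℝ) (x : M) : Set M :=
  {y | ∀ n : ℤ, dist (iterZ f n x) (iterZ f n y) ≤ ε}

def WsSet {M : Type*} [MetricSpace M] (f : M ≃ₜ M) (ε : ℝ) (x : M) : Set M :=
  {y | ∀ n : ℤ, 0 ≤ n → dist (iterZ f n x) (iterZ f n y) ≤ ε}

def WuSet {M : Type*} [MetricSpace M] (f : M ≃ₜ M) (ε : ℝ) (x : M) : Set M :=
  {y | ∀ n : ℤ, n ≤ 0 → dist (iterZ f n x) (iterZ f n y) ≤ ε}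

def NonWandering {M : Type*} [TopologicalSpace M] (f : M ≃ₜ M) : Set M :=
  {x | ∀ V : Set M, IsOpen V → x ∈ V →
    ∃ n : ℕ, 1 ≤ n ∧ ((iterZ f (n : ℤ)) '' V ∩ V).Nonempty}

lemma iterZ_add {M : Type*} [TopologicalSpace M] (f : M ≃ₜ M) (a b : ℤ) (x : M) :
    iterZ f a (iterZ f b x) = iterZ f (a + b) x := by
  simp only [iterZ, ← Equiv.Perm.mul_apply, ← zpow_add]

lemma nonWandering_closed {M : Type*} [TopologicalSpace M] (f : M ≃ₜ M) :
    IsClosed (NonWandering f) := by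
  rw [← isOpen_compl_iff, isOpen_iff_forall_mem_open]
  intro x hx
  simp only [NonWandering, mem_compl_iff, mem_setOf_eq, not_forall] at hx
  obtain ⟨V, hVopen, hxV, hV⟩ := hx
  refine ⟨V, fun y hy hyΩ => hV (hyΩ V hVopen hy), hVopen, hxV⟩

lemma nonWandering_invariant {M : Type*} [TopologicalSpace M] (f : M ≃ₜ M)
    (U : Set M) (hb : NonWandering f = ⋂ n : ℤ, iterZ f n '' U)
    (p : M) (hp : p ∈ NonWandering f) (n : ℤ) : iterZ f n p ∈ NonWandering f := by
  rw [hb] at hp ⊢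
  rw [mem_iInter] at hp ⊢
  intro m
  obtain ⟨u, hu, hup⟩ := hp (m - n)
  exact ⟨u, hu, by rw [← hup, iterZ_add]; ring_nf⟩

theorem stmt14 {M : Type*} [MetricSpace M] [CompactSpace M] (f : M ≃ₜ M)
    (α₁ : ℝ) (hα₁ : 0 < α₁)
    (ha : ∀ x y : M, x ∈ NonWandering f → y ∈ NonWandering f →
      (∀ n : ℤ, dist (iterZ f n x) (iterZ f n y) ≤ α₁) → x = y)
    (U : Set M) (hUopen : IsOpen U) (hUΩ : NonWandering f ⊆ U)
    (hb : NonWandering f = ⋂ n : ℤ, iterZ f n '' U)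
    (δ : ℝ) (hδ : 0 < δ)
    (hc : ∀ X : Set M, Disjoint X (NonWandering f) →
      (∀ n : ℤ, Metric.diam (iterZ f n '' X) ≤ δ) → X.encard ≤ 2) :
    ∃ ε > (0:ℝ), ∀ x : M, (GammaSet f ε x).encard ≤ 2 := by
  obtain ⟨r, hr, hthick⟩ :=
    ((nonWandering_closed f).isCompact).exists_thickening_subset_open hUopen hUΩ
  set ε := min (α₁ / 2) (min (δ / 2) (r / 3)) with hε
  have hεpos : 0 < ε := by positivity
  have hεα : ε ≤ α₁ / 2 := min_le_left _ _
  have hεδ : ε ≤ δ / 2 := le_trans (min_le_right _ _) (min_le_left _ _)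
  have hεr : ε ≤ r / 3 := le_trans (min_le_right _ _) (min_le_right _ _)
  refine ⟨ε, hεpos, fun x => ?_⟩
  by_cases hcase : (GammaSet f ε x ∩ NonWandering f).Nonempty
  · -- Γ meets Ω: then Γ ⊆ Ω and expansivity on Ω forces Γ to be a single point
    obtain ⟨p, hpΓ, hpΩ⟩ := hcase
    have key : ∀ y ∈ GammaSet f ε x, y ∈ NonWandering f := by
      intro y hy
      rw [hb, mem_iInter]
      intro m
      have hq : iterZ f (-m) p ∈ NonWandering f := nonWandering_invariant f U hb p hpΩ (-m)
      have hdist : dist (iterZ f (-m) y) (iterZ f (-m) p) < r := by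
        calc dist (iterZ f (-m) y) (iterZ f (-m) p)
            ≤ dist (iterZ f (-m) y) (iterZ f (-m) x) + dist (iterZ f (-m) x) (iterZ f (-m) p) :=
              dist_triangle _ _ _
          _ ≤ ε + ε := by
              rw [dist_comm (iterZ f (-m) y)]
              exact add_le_add (hy (-m)) (hpΓ (-m))
          _ < r := by linarith
      have hmem : iterZ f (-m) y ∈ U := by
        apply hthick
        rw [Metric.mem_thickening_iff]
        exact ⟨iterZ f (-m) p, hq, hdist⟩
      exact ⟨iterZ f (-m) y, hmem, by rw [iterZ_add]; simp [iterZ]⟩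
    have hsub : GammaSet f ε x ⊆ {p} := by
      intro y hy
      have : y = p := by
        apply ha y p (key y hy) hpΩ
        intro n
        calc dist (iterZ f n y) (iterZ f n p)
            ≤ dist (iterZ f n y) (iterZ f n x) + dist (iterZ f n x) (iterZ f n p) :=
              dist_triangle _ _ _
          _ ≤ ε + ε := by
              rw [dist_comm (iterZ f n y)]
              exact add_le_add (hy n) (hpΓ n)
          _ ≤ α₁ := by linarith
      simp [this]
    calc (GammaSet f ε x).encard ≤ ({p} : Set M).encard := Set.encard_le_encard hsub
      _ = 1 := Set.encard_singleton p
      _ ≤ 2 := by norm_num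
  · -- Γ is disjoint from Ω: apply hypothesis (c)
    apply hc
    · exact Set.disjoint_iff_inter_eq_empty.mpr (Set.not_nonempty_iff_eq_empty.mp hcase)
    · intro n
      apply Metric.diam_le_of_forall_dist_le hδ.le
      rintro a ⟨y, hy, rfl⟩ b ⟨z, hz, rfl⟩
      calc dist (iterZ f n y) (iterZ f n z)
          ≤ dist (iterZ f n y) (iterZ f n x) + dist (iterZ f n x) (iterZ f n z) :=
            dist_triangle _ _ _
        _ ≤ ε + ε := by
            rw [dist_comm (iterZ f n y)]
            exact add_le_add (hy n) (hz n)
        _ ≤ δ := by linarith
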